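/- Suppose that for each w, the random variable gen(w, Z^n) satisfies E_{P_{Z^n}}[exp(λ·gen(w,Z^n))] ≤ exp(λ²σ²/(2n)) for all λ ∈ ℝ, and that the joint distribution P_{WZ^n} is absolutely continuous with respect to the product P_W × P_{Z^n}. Then for all λ ∈ ℝ, E_{P_{WZ^n}}[exp(λ·gen(W,Z^n) − λ²σ²/(2n) − ı(W,Z^n))] ≤ 1, where ı(w,z) = log(dP_{WZ^n}/d(P_W×P_{Z^n}))(w,z). -/

import Mathlib

open MeasureTheory Real

/-- Main inequality (Theorem 1): if for each `w` the loss deviation `gen (w, ·)` is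
`(σ/√n)`-subgaussian with mean zero under the marginal `P_{Z^n}`, and the joint law is
absolutely continuous with respect to the product of its marginals, then for all `λ`,
`E_{P_{WZ^n}}[exp(λ gen(W,Z^n) - λ²σ²/(2n) - ı(W,Z^n))] ≤ 1`. -/
theorem main_exponential_inequality {𝒲 𝒵 : Type*} [MeasurableSpace 𝒲] [MeasurableSpace 𝒵]
    (μ : Measure (𝒲 × 𝒵)) [IsProbabilityMeasure μ] (σ : ℝ) (n : ℕ) (hn : 0 < n)
    (μW : Measure 𝒲) (μZ : Measure 𝒵) (hμW : μW = μ.map Prod.fst) (hμZ : μZ = μ.map Prod.snd)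
    (hac : μ ≪ μW.prod μZ)
    (gen : 𝒲 × 𝒵 → ℝ) (hgen : Measurable gen)
    (hsub : ∀ w : 𝒲, ∀ l : ℝ,
      ∫⁻ z, ENNReal.ofReal (Real.exp (l * gen (w, z))) ∂μZ
        ≤ ENNReal.ofReal (Real.exp (l ^ 2 * σ ^ 2 / (2 * n)))) :
    ∀ l : ℝ,
      ∫⁻ p, ENNReal.ofReal (Real.exp (l * gen p - l ^ 2 * σ ^ 2 / (2 * n)
          - Real.log (((μ.rnDeriv (μW.prod μZ)) p).toReal))) ∂μ ≤ 1 := by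
  intro l
  haveI : IsProbabilityMeasure μW := by
    rw [hμW]; exact Measure.isProbabilityMeasure_map measurable_fst.aemeasurable
  haveI : IsProbabilityMeasure μZ := by
    rw [hμZ]; exact Measure.isProbabilityMeasure_map measurable_snd.aemeasurable
  set c : ℝ := l ^ 2 * σ ^ 2 / (2 * n) with hc
  set ν := μW.prod μZ with hν
  have hmeas : Measurable fun p =>
      ENNReal.ofReal (Real.exp (l * gen p - c - Real.log ((μ.rnDeriv ν p).toReal))) :=
    (((measurable_const.mul hgen).sub measurable_const).sub
      ((μ.measurable_rnDeriv ν).ennreal_toReal.log)).exp.ennreal_ofReal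
  have key : ∫⁻ p, ENNReal.ofReal (Real.exp (l * gen p - c
        - Real.log ((μ.rnDeriv ν p).toReal))) ∂μ
      ≤ ∫⁻ p, ENNReal.ofReal (Real.exp (l * gen p - c)) ∂ν := by
    rw [← lintegral_rnDeriv_mul hac hmeas.aemeasurable]
    apply lintegral_mono_ae
    filter_upwards [Measure.rnDeriv_lt_top μ ν] with p hp
    set r := μ.rnDeriv ν p with hr
    rcases eq_or_ne r 0 with h0 | h0
    · simp [h0]
    · have ht : 0 < r.toReal := ENNReal.toReal_pos h0 hp.ne
      rw [Real.exp_sub, Real.exp_log ht]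
      nth_rewrite 1 [← ENNReal.ofReal_toReal hp.ne]
      rw [← ENNReal.ofReal_mul ht.le, mul_comm, div_mul_cancel₀ _ ht.ne']
  refine key.trans ?_
  have hsplit : ∀ p : 𝒲 × 𝒵, ENNReal.ofReal (Real.exp (l * gen p - c))
      = ENNReal.ofReal (Real.exp (-c)) * ENNReal.ofReal (Real.exp (l * gen p)) := by
    intro p
    rw [← ENNReal.ofReal_mul (Real.exp_pos _).le, ← Real.exp_add]
    ring_nf
  simp_rw [hsplit]
  rw [lintegral_const_mul _ ((hgen.const_mul l).exp.ennreal_ofReal)]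
  have htonelli : ∫⁻ p, ENNReal.ofReal (Real.exp (l * gen p)) ∂ν
      = ∫⁻ w, ∫⁻ z, ENNReal.ofReal (Real.exp (l * gen (w, z))) ∂μZ ∂μW :=
    lintegral_prod _ ((measurable_const.mul hgen).exp.ennreal_ofReal).aemeasurable
  rw [htonelli]
  have hbound : ∫⁻ w, ∫⁻ z, ENNReal.ofReal (Real.exp (l * gen (w, z))) ∂μZ ∂μW
      ≤ ENNReal.ofReal (Real.exp c) := by
    calc ∫⁻ w, ∫⁻ z, ENNReal.ofReal (Real.exp (l * gen (w, z))) ∂μZ ∂μW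
        ≤ ∫⁻ _, ENNReal.ofReal (Real.exp c) ∂μW := lintegral_mono fun w => hsub w l
      _ = ENNReal.ofReal (Real.exp c) := by simp
  calc ENNReal.ofReal (Real.exp (-c)) * ∫⁻ w, ∫⁻ z,
        ENNReal.ofReal (Real.exp (l * gen (w, z))) ∂μZ ∂μW
      ≤ ENNReal.ofReal (Real.exp (-c)) * ENNReal.ofReal (Real.exp c) :=
        by gcongr
    _ = 1 := by
        rw [← ENNReal.ofReal_mul (Real.exp_pos _).le, ← Real.exp_add]
        simp
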